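/- arXiv:1406.3279 — 4 statements merged into one kernel-verified Lean document; each statement's English description precedes it below -/
import Mathlib

section
/- Let n, B, K be natural numbers with B ≥ 2, and let F be a finite family of block assignments β : Fin (2n) → Fin K, each of whose fibers has at most B elements. Suppose that for every bijection σ : Fin n ≃ Fin n there exists some β ∈ F with β(i) = β(n + σ(i)) for all i ∈ Fin n. Then |F| · ⌊B/2⌋^n ≥ n!. -/
open Finset

lemma key_count (n B K : ℕ) (β : Fin (2 * n) → Fin K)
    (hfib : ∀ k : Fin K, (Finset.univ.filter fun x => β x = k).card ≤ B) :
    (Finset.univ.filter fun σ : Equiv.Perm (Fin n) => ∀ i : Fin n,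
      β ⟨i.val, by omega⟩ = β ⟨n + (σ i).val, by omega⟩).card ≤ (B / 2) ^ n := by
  classical
  set S := (Finset.univ.filter fun σ : Equiv.Perm (Fin n) => ∀ i : Fin n,
      β ⟨i.val, by omega⟩ = β ⟨n + (σ i).val, by omega⟩) with hS
  rcases S.eq_empty_or_nonempty with h | ⟨σ0, hσ0⟩
  · simp [h]
  · have P0 : ∀ i : Fin n, β ⟨i.val, by omega⟩ = β ⟨n + (σ0 i).val, by omega⟩ :=
      (Finset.mem_filter.mp hσ0).2
    set T : Fin n → Finset (Fin n) := fun i =>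
      Finset.univ.filter fun j => β ⟨n + j.val, by omega⟩ = β ⟨i.val, by omega⟩ with hT
    have hTcard : ∀ i, (T i).card ≤ B / 2 := by
      intro i
      set U : Finset (Fin n) :=
        Finset.univ.filter fun j => β ⟨j.val, by omega⟩ = β ⟨i.val, by omega⟩ with hU
      have hcard : (T i).card = U.card := by
        apply Finset.card_bij' (fun j _ => σ0.symm j) (fun j _ => σ0 j)
        · intro j hj
          simp only [hT, hU, Finset.mem_filter, Finset.mem_univ, true_and] at hj ⊢
          have := P0 (σ0.symm j)
          simp only [Equiv.apply_symm_apply] at this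
          rw [this]; exact hj
        · intro j hj
          simp only [hT, hU, Finset.mem_filter, Finset.mem_univ, true_and] at hj ⊢
          rw [← P0 j]; exact hj
        · intro j _; simp
        · intro j _; simp
      -- embed into fiber
      have e1inj : Function.Injective (fun j : Fin n => (⟨j.val, by omega⟩ : Fin (2 * n))) := by
        intro a b hab; simpa [Fin.ext_iff] using hab
      have e2inj : Function.Injective (fun j : Fin n => (⟨n + j.val, by omega⟩ : Fin (2 * n))) := by
        intro a b hab; simp only [Fin.mk.injEq] at hab; exact Fin.ext (by omega)
      have hsub : (U.map ⟨_, e1inj⟩ ∪ (T i).map ⟨_, e2inj⟩) ⊆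
          Finset.univ.filter fun x => β x = β ⟨i.val, by omega⟩ := by
        intro x hx
        simp only [Finset.mem_union, Finset.mem_map, Function.Embedding.coeFn_mk,
          hU, hT, Finset.mem_filter, Finset.mem_univ, true_and] at hx ⊢
        rcases hx with ⟨j, hj, rfl⟩ | ⟨j, hj, rfl⟩ <;> exact hj
      have hdisj : Disjoint (U.map ⟨_, e1inj⟩) ((T i).map ⟨_, e2inj⟩) := by
        rw [Finset.disjoint_left]
        intro x hx1 hx2
        simp only [Finset.mem_map, Function.Embedding.coeFn_mk] at hx1 hx2
        obtain ⟨a, _, ha⟩ := hx1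
        obtain ⟨b, _, hb⟩ := hx2
        rw [← hb] at ha
        have := congrArg Fin.val ha
        simp only at this
        omega
      have := Finset.card_le_card hsub
      rw [Finset.card_union_of_disjoint hdisj, Finset.card_map, Finset.card_map] at this
      have hB' := hfib (β ⟨i.val, by omega⟩)
      omega
    calc S.card ≤ (Fintype.piFinset T).card := by
          apply Finset.card_le_card_of_injOn (fun σ : Equiv.Perm (Fin n) => (σ : Fin n → Fin n))
          · intro σ hσ
            have hσ' := (Finset.mem_filter.mp hσ).2
            rw [Finset.mem_coe, Fintype.mem_piFinset]
            intro i
            simp only [hT, Finset.mem_filter, Finset.mem_univ, true_and]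
            exact (hσ' i).symm
          · intro a _ b _ hab
            exact Equiv.coe_fn_injective hab
      _ = ∏ i, (T i).card := Fintype.card_piFinset T
      _ ≤ ∏ _i : Fin n, (B / 2) := Finset.prod_le_prod' fun i _ => hTcard i
      _ = (B / 2) ^ n := by simp

/-- If a finite family `F` of block assignments `β : Fin (2n) → Fin K`, each with
fibers of size at most `B` (where `B ≥ 2`), solves every proximate-neighbors
instance `σ : Fin n ≃ Fin n`, then `|F| · (B/2)^n ≥ n!`. -/
theorem stmt2 (n B K : ℕ) (hB : 2 ≤ B) (F : Finset (Fin (2 * n) → Fin K))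
    (hfib : ∀ β ∈ F, ∀ k : Fin K, (Finset.univ.filter fun x => β x = k).card ≤ B)
    (hcov : ∀ σ : Equiv.Perm (Fin n), ∃ β ∈ F, ∀ i : Fin n,
      β ⟨i.val, by omega⟩ = β ⟨n + (σ i).val, by omega⟩) :
    Nat.factorial n ≤ F.card * (B / 2) ^ n := by
  classical
  choose g hg1 hg2 using hcov
  have hcard : Nat.factorial n = (Finset.univ : Finset (Equiv.Perm (Fin n))).card := by
    simp [Fintype.card_perm]
  rw [hcard]
  have hsub : (Finset.univ : Finset (Equiv.Perm (Fin n))) ⊆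
      F.biUnion fun β => Finset.univ.filter fun σ => g σ = β := by
    intro σ _
    rw [Finset.mem_biUnion]
    exact ⟨g σ, hg1 σ, by simp⟩
  calc (Finset.univ : Finset (Equiv.Perm (Fin n))).card
      ≤ (F.biUnion fun β => Finset.univ.filter fun σ => g σ = β).card :=
        Finset.card_le_card hsub
    _ ≤ ∑ β ∈ F, (Finset.univ.filter fun σ => g σ = β).card := Finset.card_biUnion_le
    _ ≤ ∑ β ∈ F, (B / 2) ^ n := by
        apply Finset.sum_le_sum
        intro β hβ
        calc (Finset.univ.filter fun σ => g σ = β).card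
            ≤ (Finset.univ.filter fun σ : Equiv.Perm (Fin n) => ∀ i : Fin n,
                β ⟨i.val, by omega⟩ = β ⟨n + (σ i).val, by omega⟩).card := by
              apply Finset.card_le_card
              intro σ hσ
              rw [Finset.mem_filter] at hσ ⊢
              refine ⟨Finset.mem_univ _, ?_⟩
              intro i
              rw [← hσ.2]
              exact hg2 σ i
          _ ≤ (B / 2) ^ n := key_count n B K β (hfib β hβ)
    _ = F.card * (B / 2) ^ n := by rw [Finset.sum_const, smul_eq_mul]
end

section
/- Let n ≥ 2 and let w ∈ FreeSemigroup (Fin n) be the product of(0)·of(1)···of(n−1). Let T ≥ 1 and let c : Fin T → FreeSemigroup (Fin n) be a straight-line program: for every t, either c(t) = of(i) for some i ∈ Fin n, or there exist a, b < t with c(t) = c(a)·c(b); and suppose c(T−1) = w. Then for every index i with i + 1 < n there exist t and a, b < t such that c(t) = c(a)·c(b), where c(a) = of(h)·of(h+1)···of(i) for some h ≤ i and c(b) = of(i+1)·of(i+2)···of(k) for some k with i < k < n. -/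
/-- Product `f j * f (j+1) * ⋯ * f (j+m)` in a semigroup. -/
def sprod {α : Type*} [Semigroup α] (f : ℕ → α) (j : ℕ) : ℕ → α
  | 0 => f j
  | m + 1 => sprod f j m * f (j + (m + 1))

/-- The `i`-th generator of the free semigroup on `Fin n` (indices taken mod `n`). -/
def gen (n : ℕ) (hn : 0 < n) (i : ℕ) : FreeSemigroup (Fin n) :=
  FreeSemigroup.of ⟨i % n, Nat.mod_lt i hn⟩

/-- The contiguous product `of(j) · of(j+1) · ⋯ · of(k)` of generators. -/
def seg (n : ℕ) (hn : 0 < n) (j k : ℕ) : FreeSemigroup (Fin n) :=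
  sprod (gen n hn) j (k - j)

namespace St5

def toL {α : Type*} (x : FreeSemigroup α) : List α := x.1 :: x.2

lemma toL_mul {α : Type*} (x y : FreeSemigroup α) : toL (x * y) = toL x ++ toL y := rfl

lemma toL_inj {α : Type*} {x y : FreeSemigroup α} (h : toL x = toL y) : x = y := by
  cases x; cases y; simpa [toL] using h

lemma toL_sprod {n : ℕ} (hn : 0 < n) (j m : ℕ) :
    toL (sprod (gen n hn) j m) =
      (List.range (m + 1)).map (fun t => (⟨(j + t) % n, Nat.mod_lt _ hn⟩ : Fin n)) := by
  induction m with
  | zero =>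
    simp [sprod, gen, toL, FreeSemigroup.of, List.range_succ]
  | succ m ih =>
    rw [sprod, toL_mul, ih]
    have hr : List.range (m + 1 + 1) = List.range (m + 1) ++ [m + 1] := List.range_succ (n := m + 1)
    rw [hr, List.map_append]
    simp [gen, toL, FreeSemigroup.of]

lemma split {n : ℕ} (hn : 0 < n) (j m : ℕ) (x y : FreeSemigroup (Fin n))
    (h : x * y = sprod (gen n hn) j m) :
    ∃ d, d < m ∧ x = sprod (gen n hn) j d ∧
      y = sprod (gen n hn) (j + d + 1) (m - d - 1) := by
  have hL : toL x ++ toL y = (List.range (m + 1)).map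
      (fun t => (⟨(j + t) % n, Nat.mod_lt _ hn⟩ : Fin n)) := by
    rw [← toL_mul, h, toL_sprod]
  have hxlen : 1 ≤ (toL x).length := by cases x; simp [toL]
  have hylen : 1 ≤ (toL y).length := by cases y; simp [toL]
  have hlen : (toL x).length + (toL y).length = m + 1 := by
    have := congrArg List.length hL
    simpa using this
  obtain ⟨d, hd⟩ : ∃ d, (toL x).length = d + 1 := ⟨(toL x).length - 1, by omega⟩
  have hdm : d < m := by omega
  have hrange : List.range (m + 1) =
      List.range (d + 1) ++ (List.range (m - d)).map (fun t => (d + 1) + t) := by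
    have : m + 1 = (d + 1) + (m - d) := by omega
    rw [this, List.range_add]
  rw [hrange, List.map_append] at hL
  have hinj := List.append_inj hL (by simp [hd])
  refine ⟨d, hdm, toL_inj ?_, toL_inj ?_⟩
  · rw [toL_sprod, hinj.1]
  · rw [toL_sprod, hinj.2, List.map_map, show m - d - 1 + 1 = m - d by omega]
    apply List.map_congr_left
    intro t _
    simp only [Function.comp_apply, Fin.mk.injEq]
    congr 1
    omega

end St5

/-- Any straight-line program `c : Fin T → FreeSemigroup (Fin n)` (each value a
generator or a product of two earlier values) whose last value is the full
product `of(0)·of(1)⋯of(n-1)` must, for every boundary index `i` with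
`i + 1 < n`, compute some `c t = c a * c b` with `c a = of(h)⋯of(i)` for some
`h ≤ i` and `c b = of(i+1)⋯of(k)` for some `i < k < n`. -/
theorem stmt5 (n : ℕ) (hn : 2 ≤ n) (T : ℕ) (hT : 1 ≤ T)
    (c : Fin T → FreeSemigroup (Fin n))
    (hslp : ∀ t : Fin T,
      (∃ i : Fin n, c t = FreeSemigroup.of i) ∨
      (∃ a b : Fin T, a < t ∧ b < t ∧ c t = c a * c b))
    (hlast : c ⟨T - 1, by omega⟩ = seg n (by omega) 0 (n - 1)) :
    ∀ i : ℕ, i + 1 < n →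
      ∃ t a b : Fin T, a < t ∧ b < t ∧ c t = c a * c b ∧
        (∃ h : ℕ, h ≤ i ∧ c a = seg n (by omega) h i) ∧
        (∃ k : ℕ, i < k ∧ k < n ∧ c b = seg n (by omega) (i + 1) k) := by
  intro i hi
  have hn0 : 0 < n := by omega
  have key : ∀ t : ℕ, ∀ ht : t < T, ∀ j k : ℕ, j ≤ i → i < k → k < n →
      c ⟨t, ht⟩ = seg n hn0 j k →
      ∃ t a b : Fin T, a < t ∧ b < t ∧ c t = c a * c b ∧
        (∃ h : ℕ, h ≤ i ∧ c a = seg n hn0 h i) ∧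
        (∃ k : ℕ, i < k ∧ k < n ∧ c b = seg n hn0 (i + 1) k) := by
    intro t
    induction t using Nat.strong_induction_on with
    | _ t IH =>
      intro ht j k hji hik hkn hc
      rcases hslp ⟨t, ht⟩ with ⟨i0, hi0⟩ | ⟨a, b, hat, hbt, hcab⟩
      · exfalso
        have h1 := congrArg St5.toL (hi0.symm.trans hc)
        unfold seg at h1
        rw [St5.toL_sprod] at h1
        have := congrArg List.length h1
        simp [St5.toL, FreeSemigroup.of] at this
        omega
      · have hsp : c a * c b = sprod (gen n hn0) j (k - j) := by
          rw [← hcab, hc]; rfl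
        obtain ⟨d, hd, hca, hcb⟩ := St5.split hn0 j (k - j) (c a) (c b) hsp
        have hcb' : c b = seg n hn0 (j + d + 1) k := by
          rw [hcb]; unfold seg; congr 1; omega
        rcases Nat.lt_trichotomy (j + d) i with hlt | heq | hgt
        · -- boundary inside c b
          have := IH b.1 (by exact_mod_cast hbt) b.2 (j + d + 1) k (by omega) hik hkn
            (by rw [Fin.eta]; exact hcb')
          exact this
        · -- exact boundary
          refine ⟨⟨t, ht⟩, a, b, hat, hbt, hcab, ⟨j, hji, ?_⟩, ⟨k, hik, hkn, ?_⟩⟩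
          · rw [hca]; unfold seg; congr 1; omega
          · rw [hcb']; congr 1; omega
        · -- boundary inside c a
          have hca' : c a = seg n hn0 j (j + d) := by
            rw [hca]; unfold seg; congr 1; omega
          exact IH a.1 (by exact_mod_cast hat) a.2 j (j + d) hji hgt (by omega)
            (by rw [Fin.eta]; exact hca')
  exact key (T - 1) (by omega) 0 (n - 1) (by omega) (by omega) (by omega) hlast
end

section
/- For real numbers N, M, B, P with 1 ≤ B, 0 < P, 0 < M and 4B ≤ N, define d(N,M,B,P) = max(2, min(M/B, N/(P·B))) and perm(N,M,B,P) = min( N/P , (N/(P·B)) · max(1, log_{d(N,M,B,P)}(N/B)) ). Then perm(N, 2M, 2B, P) ≥ (1/4) · perm(N, M, B, P). -/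
/-- The base `d(N,M,B,P) = max(2, min(M/B, N/(P·B)))` of the PEM permuting bound. -/
noncomputable def dval (N M B P : ℝ) : ℝ := max 2 (min (M / B) (N / (P * B)))

/-- The PEM permuting complexity
`perm(N,M,B,P) = min(N/P, (N/(P·B)) · max(1, log_d(N/B)))`. -/
noncomputable def permval (N M B P : ℝ) : ℝ :=
  min (N / P) ((N / (P * B)) * max 1 (Real.logb (dval N M B P) (N / B)))

/-- Doubling the cache and block sizes decreases the permuting bound by at most a
factor of 4: `perm(N, 2M, 2B, P) ≥ (1/4) · perm(N, M, B, P)`. -/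
theorem stmt10 (N M B P : ℝ) (hB : 1 ≤ B) (hP : 0 < P) (hM : 0 < M)
    (hN : 4 * B ≤ N) :
    permval N (2 * M) (2 * B) P ≥ (1 / 4) * permval N M B P := by
  have hB0 : (0:ℝ) < B := by linarith
  have hN0 : (0:ℝ) < N := by linarith
  have hPB : (0:ℝ) < P * B := by positivity
  set d := dval N M B P with hd
  set d' := dval N (2*M) (2*B) P with hd'
  have hd2 : 2 ≤ d := le_max_left _ _
  have hd'2 : 2 ≤ d' := le_max_left _ _
  have hd'd : d' ≤ d := by
    rw [hd, hd', dval, dval]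
    apply max_le_max le_rfl
    apply min_le_min
    · rw [mul_div_mul_left _ _ (by norm_num : (2:ℝ) ≠ 0)]
    · apply div_le_div_of_nonneg_left hN0.le hPB
      nlinarith
  have hNB4 : (4:ℝ) ≤ N / B := by
    rw [le_div_iff₀ hB0]; linarith
  have hNB2 : (2:ℝ) ≤ N / (2 * B) := by
    rw [le_div_iff₀ (by linarith : (0:ℝ) < 2*B)]; linarith
  -- key: max 1 (logb d' (N/(2B))) ≥ (1/2) * max 1 (logb d (N/B))
  have hlog_mono : Real.logb d (N / (2*B)) ≤ Real.logb d' (N / (2*B)) := by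
    rw [Real.logb, Real.logb]
    apply div_le_div_of_nonneg_left
    · exact Real.log_nonneg (by linarith)
    · exact Real.log_pos (by linarith)
    · exact Real.log_le_log (by linarith) hd'd
  have hsplit : Real.logb d (N / (2*B)) = Real.logb d (N / B) - Real.logb d 2 := by
    have : N / (2*B) = (N/B) / 2 := by ring
    rw [this, Real.logb_div (by positivity) (by norm_num)]
  have hlogd2 : Real.logb d 2 ≤ 1 := by
    calc Real.logb d 2 ≤ Real.logb d d :=
          Real.logb_le_logb_of_le (by linarith) (by norm_num) hd2
      _ = 1 := Real.logb_self_eq_one (by linarith)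
  have hkey : (1/2) * max 1 (Real.logb d (N / B)) ≤
      max 1 (Real.logb d' (N / (2*B))) := by
    rcases le_total (Real.logb d (N / B)) 2 with h | h
    · calc (1/2) * max 1 (Real.logb d (N / B)) ≤ (1/2) * 2 := by
            apply mul_le_mul_of_nonneg_left (max_le (by norm_num) h) (by norm_num)
        _ = 1 := by norm_num
        _ ≤ _ := le_max_left _ _
    · have h1 : (1/2) * max 1 (Real.logb d (N / B)) = (1/2) * Real.logb d (N / B) := by
        rw [max_eq_right (by linarith)]
      rw [h1]
      calc (1/2) * Real.logb d (N / B) ≤ Real.logb d (N / B) - 1 := by linarith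
        _ ≤ Real.logb d (N / (2*B)) := by rw [hsplit]; linarith
        _ ≤ Real.logb d' (N / (2*B)) := hlog_mono
        _ ≤ _ := le_max_right _ _
  rw [ge_iff_le, permval, permval]
  have hmax0 : (0:ℝ) ≤ max 1 (Real.logb d (N / B)) := le_trans zero_le_one (le_max_left _ _)
  apply le_min
  · calc (1/4) * min (N / P) ((N / (P * B)) * max 1 (Real.logb d (N / B)))
        ≤ (1/4) * (N/P) := by
          apply mul_le_mul_of_nonneg_left (min_le_left _ _) (by norm_num)
      _ ≤ N / P := by
          have : (0:ℝ) ≤ N / P := by positivity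
          linarith
  · calc (1/4) * min (N / P) ((N / (P * B)) * max 1 (Real.logb d (N / B)))
        ≤ (1/4) * ((N / (P * B)) * max 1 (Real.logb d (N / B))) := by
          apply mul_le_mul_of_nonneg_left (min_le_right _ _) (by norm_num)
      _ = (N / (P * (2*B))) * ((1/2) * max 1 (Real.logb d (N / B))) := by
          field_simp; ring
      _ ≤ (N / (P * (2*B))) * max 1 (Real.logb d' (N / (2*B))) := by
          apply mul_le_mul_of_nonneg_left hkey (by positivity)
end

section
/- For all real numbers x > 0 and d ≥ 2, the series Σ_{i=0}^{∞} (3/4)^i · x · max(1, log_d((3/4)^i · x)) converges and its sum is at most 4 · x · max(1, log_d(x)). -/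
/-- For `x > 0` and `d ≥ 2`, the series `Σ_i (3/4)^i · x · max(1, log_d((3/4)^i·x))`
converges and its sum is at most `4 · x · max(1, log_d x)`. -/
theorem stmt11 (x d : ℝ) (hx : 0 < x) (hd : 2 ≤ d) :
    Summable (fun i : ℕ =>
      (3 / 4 : ℝ) ^ i * x * max 1 (Real.logb d ((3 / 4 : ℝ) ^ i * x))) ∧
    (∑' i : ℕ, (3 / 4 : ℝ) ^ i * x * max 1 (Real.logb d ((3 / 4 : ℝ) ^ i * x))) ≤
      4 * x * max 1 (Real.logb d x) := by
  have hd1 : (1 : ℝ) < d := by linarith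
  have hterm_le : ∀ i : ℕ,
      (3 / 4 : ℝ) ^ i * x * max 1 (Real.logb d ((3 / 4 : ℝ) ^ i * x)) ≤
      (3 / 4 : ℝ) ^ i * (x * max 1 (Real.logb d x)) := by
    intro i
    have hp : (0:ℝ) < (3/4:ℝ)^i := by positivity
    have hle : (3/4:ℝ)^i * x ≤ x := by
      have : (3/4:ℝ)^i ≤ 1 := pow_le_one₀ (by norm_num) (by norm_num)
      nlinarith
    have hlog : Real.logb d ((3/4:ℝ)^i * x) ≤ Real.logb d x :=
      Real.logb_le_logb_of_le hd1 (mul_pos hp hx) hle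
    have hmax : max 1 (Real.logb d ((3/4:ℝ)^i * x)) ≤ max 1 (Real.logb d x) :=
      max_le_max le_rfl hlog
    have := mul_le_mul_of_nonneg_left hmax (le_of_lt (mul_pos hp hx))
    linarith [this]
  have hnonneg : ∀ i : ℕ,
      0 ≤ (3 / 4 : ℝ) ^ i * x * max 1 (Real.logb d ((3 / 4 : ℝ) ^ i * x)) := by
    intro i
    have hp : (0:ℝ) < (3/4:ℝ)^i := by positivity
    have : (0:ℝ) ≤ max 1 (Real.logb d ((3/4:ℝ)^i * x)) := le_trans zero_le_one (le_max_left _ _)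
    positivity
  have hgeo : Summable (fun i : ℕ => (3/4:ℝ)^i * (x * max 1 (Real.logb d x))) :=
    (summable_geometric_of_lt_one (by norm_num) (by norm_num)).mul_right _
  have hsum : Summable (fun i : ℕ =>
      (3 / 4 : ℝ) ^ i * x * max 1 (Real.logb d ((3 / 4 : ℝ) ^ i * x))) :=
    Summable.of_nonneg_of_le hnonneg hterm_le hgeo
  refine ⟨hsum, ?_⟩
  have h1 : (∑' i : ℕ, (3 / 4 : ℝ) ^ i * x * max 1 (Real.logb d ((3 / 4 : ℝ) ^ i * x))) ≤
      ∑' i : ℕ, (3/4:ℝ)^i * (x * max 1 (Real.logb d x)) :=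
    Summable.tsum_le_tsum hterm_le hsum hgeo
  have h2 : (∑' i : ℕ, (3/4:ℝ)^i * (x * max 1 (Real.logb d x)))
      = 4 * (x * max 1 (Real.logb d x)) := by
    rw [tsum_mul_right, tsum_geometric_of_lt_one (by norm_num) (by norm_num)]
    norm_num
  rw [mul_assoc]
  linarith [h1, h2.le, h2.ge]
end
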